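/- Let (T_x)_{x∈X} be a measurable family of measurable bijections of a space Y, q a probability measure on X, and η a probability measure on Y satisfying the stationarity equation η = ∫ (T_x)_* η dq(x). Suppose η has atoms, and let z₁,…,z_N be the atoms of maximal mass a. If for a positive q-measure set of x one has {T_x^{-1}(z₁),…,T_x^{-1}(z_N)} ≠ {z₁,…,z_N}, then there exists z ∉ {z₁,…,z_N} with η({z}) = a — a contradiction with maximality. Hence if no finite set is invariant under T_x for q-a.e. x, then every stationary measure η is non-atomic. -/

import Mathlib

open MeasureTheory ENNReal

/-- Lemma `l.nonatomicmeasure` (abstract form): if `η` is a stationary measure for a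
measurable family of bijections `(T_x)` and no finite nonempty set is invariant under
`T_x` for `q`-a.e. `x`, then `η` is non-atomic. -/
theorem stmt11 {X Y : Type*} [MeasurableSpace X] [MeasurableSpace Y]
    [MeasurableSingletonClass Y]
    (q : Measure X) [IsProbabilityMeasure q]
    (T : X → Y → Y) (hTbij : ∀ x, Function.Bijective (T x))
    (hTmeas : Measurable fun p : X × Y => T p.1 p.2)
    (η : Measure Y) [IsProbabilityMeasure η]
    (hstat : ∀ E : Set Y, MeasurableSet E → η E = ∫⁻ x, η (T x ⁻¹' E) ∂q)
    (hnofin : ∀ F : Finset Y, F.Nonempty →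
      ¬ (∀ᵐ x ∂q, T x ⁻¹' (F : Set Y) = (F : Set Y))) :
    ∀ y : Y, η {y} = 0 := by
  by_contra hcon
  push_neg at hcon
  obtain ⟨y₀, hy₀⟩ := hcon
  classical
  set a : ℝ≥0∞ := ⨆ z : Y, η {z} with ha
  have hle : ∀ z : Y, η {z} ≤ a := fun z => le_iSup (fun z : Y => η {z}) z
  have ha1 : a ≤ 1 := iSup_le fun z => prob_le_one
  have hatop : a ≠ ⊤ := (ha1.trans_lt ENNReal.one_lt_top).ne
  have hapos : 0 < a := (pos_iff_ne_zero.mpr hy₀).trans_le (hle y₀)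
  -- the set of atoms of mass ≥ a/2 is finite
  have hSfin : Set.Finite {z : Y | a / 2 ≤ η {z}} := by
    refine Measure.finite_const_le_meas_of_disjoint_iUnion η
      (ENNReal.half_pos hapos.ne') (fun z => measurableSet_singleton z)
      (fun z w hzw => by simpa [Function.onFun] using hzw) ?_
    rw [Set.iUnion_of_singleton]
    exact (measure_lt_top η _).ne
  -- the sup is attained
  have hhalf : a / 2 < a := ENNReal.half_lt_self hapos.ne' hatop
  obtain ⟨z₁, hz₁⟩ : ∃ z : Y, a / 2 < η {z} := by
    simpa [ha] using (lt_iSup_iff).mp hhalf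
  have hSne : {z : Y | a / 2 ≤ η {z}}.Nonempty := ⟨z₁, hz₁.le⟩
  obtain ⟨z₀, hz₀S, hz₀max⟩ := Set.Finite.exists_maximalFor (fun z => η {z}) _ hSfin hSne
  have hz₀ : η {z₀} = a := by
    refine le_antisymm (hle z₀) (iSup_le fun z => ?_)
    by_cases hz : a / 2 ≤ η {z}
    · rcases le_or_gt (η {z}) (η {z₀}) with h | h
      · exact h
      · exact hz₀max hz h.le
    · exact (not_le.mp hz).le.trans hz₀S
  -- the finset of maximal atoms
  have hFsub : {z : Y | η {z} = a} ⊆ {z : Y | a / 2 ≤ η {z}} := fun z hz => by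
    simp only [Set.mem_setOf_eq] at hz ⊢; rw [hz]; exact hhalf.le
  have hFfin : Set.Finite {z : Y | η {z} = a} := hSfin.subset hFsub
  set F : Finset Y := hFfin.toFinset with hF
  have hmemF : ∀ z : Y, z ∈ F ↔ η {z} = a := fun z => by simp [hF]
  have hFne : F.Nonempty := ⟨z₀, (hmemF z₀).mpr hz₀⟩
  -- equivalences
  set e : X → Y ≃ Y := fun x => Equiv.ofBijective (T x) (hTbij x) with he
  have hpre : ∀ (x : X) (y : Y), T x ⁻¹' {y} = {(e x).symm y} := by
    intro x y
    ext z
    simp only [Set.mem_preimage, Set.mem_singleton_iff]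
    constructor
    · intro h
      exact ((e x).symm_apply_eq.mpr h.symm).symm
    · intro h
      exact ((e x).symm_apply_eq.mp h.symm).symm
  -- for each maximal atom y, a.e. x sends it (backwards) into F
  have key : ∀ y ∈ F, ∀ᵐ x ∂q, (e x).symm y ∈ F := by
    intro y hy
    have hya : η {y} = a := (hmemF y).mp hy
    have hint : η {y} = ∫⁻ x, η (T x ⁻¹' {y}) ∂q := hstat {y} (measurableSet_singleton y)
    have hfmeas : Measurable fun x => η (T x ⁻¹' {y}) := by
      have h1 : ∀ x, η (T x ⁻¹' {y}) =
          ∫⁻ z, Set.indicator {y} (fun _ => (1 : ℝ≥0∞)) (T x z) ∂η := by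
        intro x
        have hmeasTx : Measurable (T x) := hTmeas.comp measurable_prodMk_left
        rw [← lintegral_indicator_one (hmeasTx (measurableSet_singleton y))]
        congr 1
      simp only [h1]
      exact Measurable.lintegral_prod_right
        ((measurable_const.indicator (measurableSet_singleton y)).comp hTmeas)
    have hflea : ∀ x, η (T x ⁻¹' {y}) ≤ a := by
      intro x; rw [hpre x y]; exact hle _
    have hinta : ∫⁻ x, η (T x ⁻¹' {y}) ∂q = a := hint.symm.trans hya
    have haeq : (fun x => η (T x ⁻¹' {y})) =ᵐ[q] fun _ => a := by
      refine ae_eq_of_ae_le_of_lintegral_le (ae_of_all q hflea) ?_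
        aemeasurable_const ?_
      · rw [hinta]; exact hatop
      · rw [hinta, lintegral_const, measure_univ, mul_one]
    filter_upwards [haeq] with x hx
    rw [hmemF]
    rw [hpre x y] at hx
    exact hx
  -- a.e. x, the preimage of F equals F
  have hae : ∀ᵐ x ∂q, T x ⁻¹' (F : Set Y) = (F : Set Y) := by
    have hall : ∀ᵐ x ∂q, ∀ y ∈ F, (e x).symm y ∈ F := by
      rw [Filter.eventually_all_finset]
      exact key
    filter_upwards [hall] with x hx
    have himg : F.image (e x).symm = F := by
      apply Finset.eq_of_subset_of_card_le
      · intro z hz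
        obtain ⟨y, hy, rfl⟩ := Finset.mem_image.mp hz
        exact hx y hy
      · rw [Finset.card_image_of_injective _ (e x).symm.injective]
    have hTeq : T x ⁻¹' (F : Set Y) = (e x).symm '' (F : Set Y) := by
      ext z
      simp only [Set.mem_preimage, Set.mem_image]
      constructor
      · intro hz
        exact ⟨T x z, hz, (e x).symm_apply_apply z⟩
      · rintro ⟨y, hy, rfl⟩
        have hxy : T x ((e x).symm y) = y := (e x).apply_symm_apply y
        rw [hxy]
        exact hy
    rw [hTeq, ← Finset.coe_image, himg]
  exact hnofin F hFne hae
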